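/- Let Vir be the Virasoro algebra. Then every 1/2-derivation of Vir is a scalar multiple of the identity map. -/

import Mathlib

/-- Index set for the basis of the Virasoro algebra. -/
inductive VirIdx : Type
  | l : ℤ → VirIdx
  | c : VirIdx

instance : DecidableEq VirIdx
  | .l m, .l n => decidable_of_iff (m = n) (by simp)
  | .l _, .c => .isFalse (fun h => VirIdx.noConfusion h)
  | .c, .l _ => .isFalse (fun h => VirIdx.noConfusion h)
  | .c, .c => .isTrue rfl

private def brL (V : Type*) [LieRing V] [LieAlgebra ℂ V] (y : V) : V →ₗ[ℂ] V where
  toFun x := ⁅x, y⁆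
  map_add' a b := add_lie a b y
  map_smul' c a := smul_lie c a y

private def brR (V : Type*) [LieRing V] [LieAlgebra ℂ V] (y : V) : V →ₗ[ℂ] V where
  toFun x := ⁅y, x⁆
  map_add' a b := lie_add y a b
  map_smul' c a := lie_smul c y a

/-- Every 1/2-derivation of the Virasoro algebra is a scalar multiple of the
identity map. -/
theorem stmt10 (V : Type*) [LieRing V] [LieAlgebra ℂ V] (b : Module.Basis VirIdx ℂ V)
    (hLL : ∀ m n : ℤ, ⁅b (.l m), b (.l n)⁆ =
      ((n - m : ℤ) : ℂ) • b (.l (m + n)) +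
      (if m + n = 0 then (((m : ℂ) ^ 3 - m) / 12) else 0) • b .c)
    (hc : ∀ x : V, ⁅b .c, x⁆ = 0)
    (φ : V →ₗ[ℂ] V)
    (hφ : ∀ x y : V, φ ⁅x, y⁆ = (1/2 : ℂ) • (⁅φ x, y⁆ + ⁅x, φ y⁆)) :
    ∃ c : ℂ, φ = c • (LinearMap.id : V →ₗ[ℂ] V) := by
  classical
  have hc' : ∀ x : V, ⁅x, b .c⁆ = 0 := fun x => by
    rw [← lie_skew, hc, neg_zero]
  -- coordinate formulas for brackets with basis vectors
  have key1 : ∀ (n j : ℤ) (x : V), b.repr ⁅x, b (.l n)⁆ (VirIdx.l j)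
      = ((2*n - j : ℤ) : ℂ) * b.repr x (VirIdx.l (j - n)) := by
    intro n j
    have hmap : (Finsupp.lapply (VirIdx.l j)).comp ((b.repr : V →ₗ[ℂ] (VirIdx →₀ ℂ)).comp (brL V (b (.l n))))
        = ((2*n - j : ℤ) : ℂ) • ((Finsupp.lapply (VirIdx.l (j-n))).comp (b.repr : V →ₗ[ℂ] (VirIdx →₀ ℂ))) := by
      apply b.ext
      rintro (k | _)
      · simp only [LinearMap.comp_apply, LinearMap.smul_apply, Finsupp.lapply_apply,
          LinearEquiv.coe_coe, brL, LinearMap.coe_mk, AddHom.coe_mk, hLL, map_add, map_smul,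
          Finsupp.add_apply, Finsupp.smul_apply, Module.Basis.repr_self, Finsupp.single_apply,
          VirIdx.l.injEq, smul_eq_mul]
        split_ifs <;>
          first
            | exact ((by assumption : False)).elim
            | (exfalso; omega)
            | (push_cast; ring1)
            | (have hj : j = k + n := by omega
               subst hj
               push_cast
               ring1)
      · simp [brL, hc]
    intro x
    have := LinearMap.congr_fun hmap x
    simpa [brL] using this
  have key2 : ∀ (m j : ℤ) (x : V), b.repr ⁅b (.l m), x⁆ (VirIdx.l j)
      = ((j - 2*m : ℤ) : ℂ) * b.repr x (VirIdx.l (j - m)) := by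
    intro m j
    have hmap : (Finsupp.lapply (VirIdx.l j)).comp ((b.repr : V →ₗ[ℂ] (VirIdx →₀ ℂ)).comp (brR V (b (.l m))))
        = ((j - 2*m : ℤ) : ℂ) • ((Finsupp.lapply (VirIdx.l (j-m))).comp (b.repr : V →ₗ[ℂ] (VirIdx →₀ ℂ))) := by
      apply b.ext
      rintro (k | _)
      · simp only [LinearMap.comp_apply, LinearMap.smul_apply, Finsupp.lapply_apply,
          LinearEquiv.coe_coe, brR, LinearMap.coe_mk, AddHom.coe_mk, hLL, map_add, map_smul,
          Finsupp.add_apply, Finsupp.smul_apply, Module.Basis.repr_self, Finsupp.single_apply,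
          VirIdx.l.injEq, smul_eq_mul]
        split_ifs <;>
          first
            | exact ((by assumption : False)).elim
            | (exfalso; omega)
            | (push_cast; ring1)
            | (have hj : j = m + k := by omega
               subst hj
               push_cast
               ring1)
      · simp [brR, hc']
    intro x
    have := LinearMap.congr_fun hmap x
    simpa [brR] using this
  have key3 : ∀ (n : ℤ) (x : V), b.repr ⁅x, b (.l n)⁆ VirIdx.c
      = (((n : ℂ) - (n:ℂ)^3)/12) * b.repr x (VirIdx.l (-n)) := by
    intro n
    have hmap : (Finsupp.lapply VirIdx.c).comp ((b.repr : V →ₗ[ℂ] (VirIdx →₀ ℂ)).comp (brL V (b (.l n))))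
        = (((n : ℂ) - (n:ℂ)^3)/12) • ((Finsupp.lapply (VirIdx.l (-n))).comp (b.repr : V →ₗ[ℂ] (VirIdx →₀ ℂ))) := by
      apply b.ext
      rintro (k | _)
      · simp only [LinearMap.comp_apply, LinearMap.smul_apply, Finsupp.lapply_apply,
          LinearEquiv.coe_coe, brL, LinearMap.coe_mk, AddHom.coe_mk, hLL, map_add, map_smul,
          Finsupp.add_apply, Finsupp.smul_apply, Module.Basis.repr_self, Finsupp.single_apply,
          VirIdx.l.injEq, smul_eq_mul]
        split_ifs <;>
          first
            | exact ((by assumption : False)).elim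
            | (exfalso; omega)
            | (push_cast; ring1)
            | (have hk : k = -n := by omega
               subst hk
               push_cast
               ring1)
      · simp [brL, hc]
    intro x
    have := LinearMap.congr_fun hmap x
    simpa [brL] using this
  have key4 : ∀ (m : ℤ) (x : V), b.repr ⁅b (.l m), x⁆ VirIdx.c
      = (((m : ℂ)^3 - (m:ℂ))/12) * b.repr x (VirIdx.l (-m)) := by
    intro m
    have hmap : (Finsupp.lapply VirIdx.c).comp ((b.repr : V →ₗ[ℂ] (VirIdx →₀ ℂ)).comp (brR V (b (.l m))))
        = (((m : ℂ)^3 - (m:ℂ))/12) • ((Finsupp.lapply (VirIdx.l (-m))).comp (b.repr : V →ₗ[ℂ] (VirIdx →₀ ℂ))) := by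
      apply b.ext
      rintro (k | _)
      · simp only [LinearMap.comp_apply, LinearMap.smul_apply, Finsupp.lapply_apply,
          LinearEquiv.coe_coe, brR, LinearMap.coe_mk, AddHom.coe_mk, hLL, map_add, map_smul,
          Finsupp.add_apply, Finsupp.smul_apply, Module.Basis.repr_self, Finsupp.single_apply,
          VirIdx.l.injEq, smul_eq_mul]
        split_ifs <;>
          first
            | exact ((by assumption : False)).elim
            | (exfalso; omega)
            | (push_cast; ring1)
            | (have hk : k = -m := by omega
               subst hk
               push_cast
               ring1)
      · simp [brR, hc']
    intro x
    have := LinearMap.congr_fun hmap x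
    simpa [brR] using this
  -- notation
  set A : ℤ → ℤ → ℂ := fun m k => b.repr (φ (b (VirIdx.l m))) (VirIdx.l k) with hA
  set D : ℤ → ℂ := fun m => b.repr (φ (b (VirIdx.l m))) VirIdx.c with hD
  set E : ℤ → ℂ := fun k => b.repr (φ (b VirIdx.c)) (VirIdx.l k) with hE
  set f : ℂ := b.repr (φ (b VirIdx.c)) VirIdx.c with hf
  -- φ(C) has no L-components
  have hφc : ∀ n : ℤ, ⁅φ (b VirIdx.c), b (VirIdx.l n)⁆ = 0 := by
    intro n
    have H := hφ (b VirIdx.c) (b (VirIdx.l n))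
    rw [hc, hc, map_zero] at H
    have : (1/2 : ℂ) • (⁅φ (b VirIdx.c), b (VirIdx.l n)⁆ + 0) = 0 := H.symm
    rw [add_zero, smul_eq_zero] at this
    rcases this with h | h
    · norm_num at h
    · exact h
  have hEzero : ∀ k : ℤ, E k = 0 := by
    intro k
    have H := key1 (k+1) (2*k+1) (φ (b VirIdx.c))
    rw [hφc] at H
    rw [show (2*(k+1) - (2*k+1) : ℤ) = 1 by ring, show ((2*k+1) - (k+1) : ℤ) = k by ring] at H
    simpa [hE] using H.symm
  -- the main coordinate equations
  have star : ∀ m n j : ℤ, 2*((n-m : ℤ):ℂ) * A (m+n) j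
      = ((2*n-j : ℤ):ℂ) * A m (j-n) + ((j-2*m : ℤ):ℂ) * A n (j-m) := by
    intro m n j
    have H := hφ (b (VirIdx.l m)) (b (VirIdx.l n))
    rw [hLL m n] at H
    have H2 := congrArg (fun z => b.repr z (VirIdx.l j)) H
    simp only [map_add, map_smul, Finsupp.add_apply, Finsupp.smul_apply, smul_eq_mul] at H2
    rw [key1 n j (φ (b (VirIdx.l m))), key2 m j (φ (b (VirIdx.l n)))] at H2
    rw [show b.repr (φ (b VirIdx.c)) (VirIdx.l j) = E j from rfl, hEzero j, mul_zero, add_zero] at H2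
    push_cast at H2 ⊢
    linear_combination 2*H2
  have cstar : ∀ m n : ℤ, ((n-m : ℤ):ℂ) * D (m+n)
      + (if m + n = 0 then (((m : ℂ) ^ 3 - m) / 12) else 0) * f
      = (1/2) * ( (((n:ℂ) - (n:ℂ)^3)/12) * A m (-n) + (((m:ℂ)^3 - (m:ℂ))/12) * A n (-m) ) := by
    intro m n
    have H := hφ (b (VirIdx.l m)) (b (VirIdx.l n))
    rw [hLL m n] at H
    have H2 := congrArg (fun z => b.repr z VirIdx.c) H
    simp only [map_add, map_smul, Finsupp.add_apply, Finsupp.smul_apply, smul_eq_mul] at H2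
    rw [key3 n (φ (b (VirIdx.l m))), key4 m (φ (b (VirIdx.l n)))] at H2
    push_cast at H2 ⊢
    linear_combination H2
  -- step 1 : off-diagonal entries are translation invariant
  have step1 : ∀ n j : ℤ, j ≠ 2*n → A n j = A 0 (j - n) := by
    intro n j hj
    have H := star 0 n j
    simp only [zero_add, sub_zero] at H
    have hz : (2*n - j : ℤ) ≠ 0 := by omega
    have hne : ((2*n - j : ℤ):ℂ) ≠ 0 := Int.cast_ne_zero.mpr hz
    apply mul_left_cancel₀ hne
    push_cast at H ⊢
    linear_combination H
  -- step 2 : A k (2k) = A 0 k for k ≠ 0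
  have step2 : ∀ k : ℤ, k ≠ 0 → A k (2*k) = A 0 k := by
    intro k hk
    set n : ℤ := if 0 < k then (-1 : ℤ) else 1 with hn
    have hfacts : n ≠ 0 ∧ n ≠ k ∧ n ≠ 2*k := by
      rw [hn]; split_ifs <;> omega
    obtain ⟨h0, h1, h2⟩ := hfacts
    have H := star k n (2*k+n)
    rw [show (2*k+n-n : ℤ) = 2*k by ring, show (2*k+n-k : ℤ) = k+n by ring] at H
    have e1 : A (k+n) (2*k+n) = A 0 k := by
      have := step1 (k+n) (2*k+n) (by omega)
      rwa [show (2*k+n-(k+n) : ℤ) = k by ring] at this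
    have e2 : A n (k+n) = A 0 k := by
      have := step1 n (k+n) (by omega)
      rwa [show (k+n-n : ℤ) = k by ring] at this
    rw [e1, e2] at H
    have hz : (n - 2*k : ℤ) ≠ 0 := by omega
    have hne : ((n - 2*k : ℤ):ℂ) ≠ 0 := Int.cast_ne_zero.mpr hz
    apply mul_left_cancel₀ hne
    push_cast at H ⊢
    linear_combination -H
  -- step 3 : off-diagonal part of A 0 vanishes and D vanishes away from 0
  have step3 : ∀ s : ℤ, s ≠ 0 → A 0 (-s) = 0 ∧ D s = 0 := by
    intro s hs
    have H1 := cstar 0 s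
    rw [zero_add, if_neg hs] at H1
    have e0 : A s (-0) = A s 0 := by norm_num
    rw [e0] at H1
    have H2 := cstar (3*s) (-2*s)
    rw [show (3*s + -2*s : ℤ) = s by ring, if_neg hs] at H2
    have e1 : A (3*s) (-(-2*s)) = A 0 (-s) := by
      rw [show (-(-2*s) : ℤ) = 2*s by ring]
      have := step1 (3*s) (2*s) (by omega)
      rwa [show (2*s-3*s : ℤ) = -s by ring] at this
    have e2 : A (-2*s) (-(3*s)) = A 0 (-s) := by
      have := step1 (-2*s) (-(3*s)) (by omega)
      rwa [show (-(3*s)-(-2*s) : ℤ) = -s by ring] at this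
    rw [e1, e2] at H2
    have hsc : ((s:ℂ)) ≠ 0 := Int.cast_ne_zero.mpr hs
    have hcube : ((s:ℂ))^3 * A 0 (-s) = 0 := by
      push_cast at H1 H2 ⊢
      linear_combination (-4 : ℂ)*H1 + (-4/5 : ℂ)*H2
    have hg : A 0 (-s) = 0 := by
      rcases mul_eq_zero.mp hcube with h | h
      · exact absurd h (pow_ne_zero 3 hsc)
      · exact h
    refine ⟨hg, ?_⟩
    rw [hg] at H1
    have : (s:ℂ) * D s = 0 := by
      push_cast at H1 ⊢
      linear_combination H1
    rcases mul_eq_zero.mp this with h | h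
    · exact absurd h hsc
    · exact h
  -- all off-diagonal entries vanish
  have Azero : ∀ n j : ℤ, j ≠ n → A n j = 0 := by
    intro n j hjn
    have hA0 : ∀ t : ℤ, t ≠ 0 → A 0 t = 0 := by
      intro t ht
      have := (step3 (-t) (by omega)).1
      rwa [neg_neg] at this
    by_cases h2 : j = 2*n
    · have hn : n ≠ 0 := by omega
      rw [h2, step2 n hn]
      exact hA0 n hn
    · rw [step1 n j h2]
      exact hA0 (j - n) (by omega)
  set lam : ℂ := A 0 0 with hlam
  have Adiag : ∀ n : ℤ, A n n = lam := by
    intro n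
    by_cases hn : n = 0
    · rw [hn, hlam]
    · have := step1 n n (by omega)
      rwa [sub_self] at this
  -- D 0 = 0 and f = lam
  have hD0 : D 0 = 0 := by
    have H := cstar 1 (-1)
    rw [show (1 + -1 : ℤ) = 0 by ring, if_pos rfl] at H
    rw [show ((-(-1) : ℤ)) = 1 by ring, show ((-1 : ℤ)) = -1 by ring] at H
    rw [Adiag 1, Adiag (-1)] at H
    push_cast at H
    linear_combination (-1/2 : ℂ) * H
  have hfval : f = lam := by
    have H := cstar 2 (-2)
    rw [show (2 + -2 : ℤ) = 0 by ring, if_pos rfl] at H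
    rw [show ((-(-2) : ℤ)) = 2 by ring] at H
    rw [Adiag 2, Adiag (-2)] at H
    rw [hD0] at H
    push_cast at H
    linear_combination (2 : ℂ) * H
  have Dzero : ∀ s : ℤ, D s = 0 := by
    intro s
    by_cases hs : s = 0
    · rw [hs]; exact hD0
    · exact (step3 s hs).2
  -- conclusion
  refine ⟨lam, ?_⟩
  apply b.ext
  rintro (n | _)
  · apply b.repr.injective
    ext idx
    rcases idx with j | _
    · have hAnj : b.repr (φ (b (VirIdx.l n))) (VirIdx.l j) = A n j := rfl
      by_cases h : j = n
      · subst h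
        rw [hAnj, Adiag]
        simp [Finsupp.single_apply, Module.Basis.repr_self]
      · rw [hAnj, Azero n j h]
        simp [Finsupp.single_apply, Module.Basis.repr_self, VirIdx.l.injEq, Ne.symm h]
    · have hDn : b.repr (φ (b (VirIdx.l n))) VirIdx.c = D n := rfl
      rw [hDn, Dzero n]
      simp [Finsupp.single_apply, Module.Basis.repr_self]
  · apply b.repr.injective
    ext idx
    rcases idx with j | _
    · have hEj : b.repr (φ (b VirIdx.c)) (VirIdx.l j) = E j := rfl
      rw [hEj, hEzero j]
      simp [Finsupp.single_apply, Module.Basis.repr_self]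
    · have hfc : b.repr (φ (b VirIdx.c)) VirIdx.c = f := rfl
      rw [hfc, hfval]
      simp [Finsupp.single_apply, Module.Basis.repr_self]
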